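/- Let X ⊂ ℝⁿ be nonempty and closed, f₀ : ℝⁿ → ℝ and f₁,…,f_m : ℝⁿ → ℝ continuous. Define φ(x) = ι_X(x) + f₀(x) + ι_{(-∞,0]^m}(f₁(x),…,f_m(x)) and f(u,x) = ι_X(x) + f₀(x) + θ(u) Σᵢ max{0, fᵢ(x) + uᵢ}. Suppose u^ν → 0, θ(u^ν) → ∞, and θ(u^ν)·max{0, maxᵢ uᵢ^ν} → 0. Then f(u^ν,·) epi-converges to φ. -/

import Mathlib

open Filter Topology
open scoped Classical

theorem stmt_9 {n m : ℕ} (X : Set (Fin n → ℝ)) (hXne : X.Nonempty) (hXcl : IsClosed X)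
    (f₀ : (Fin n → ℝ) → ℝ) (hf₀ : Continuous f₀)
    (g : Fin m → (Fin n → ℝ) → ℝ) (hg : ∀ i, Continuous (g i))
    (φ : (Fin n → ℝ) → EReal)
    (hφ : ∀ x, φ x = (if x ∈ X then (0 : EReal) else ⊤) + ((f₀ x : ℝ) : EReal)
      + (if ∀ i, g i x ≤ 0 then (0 : EReal) else ⊤))
    (θ : (Fin m → ℝ) → ℝ) (hθpos : ∀ u, 0 ≤ θ u)
    (f : (Fin m → ℝ) → (Fin n → ℝ) → EReal)
    (hf : ∀ u x, f u x = (if x ∈ X then (0 : EReal) else ⊤) + ((f₀ x : ℝ) : EReal)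
      + ((θ u * ∑ i, max 0 (g i x + u i) : ℝ) : EReal))
    (uν : ℕ → Fin m → ℝ) (hu : Tendsto uν atTop (𝓝 0))
    (hθtop : Tendsto (fun ν => θ (uν ν)) atTop atTop)
    (hrate : Tendsto (fun ν => θ (uν ν) * max 0 (⨆ i, uν ν i)) atTop (𝓝 0)) :
    (∀ (x : Fin n → ℝ) (xν : ℕ → Fin n → ℝ), Tendsto xν atTop (𝓝 x) →
      φ x ≤ liminf (fun ν => f (uν ν) (xν ν)) atTop) ∧
    (∀ x : Fin n → ℝ, ∃ xν : ℕ → Fin n → ℝ, Tendsto xν atTop (𝓝 x) ∧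
      limsup (fun ν => f (uν ν) (xν ν)) atTop ≤ φ x) := by
  -- simplified form of f
  have hf' : ∀ u x, f u x =
      if x ∈ X then (((f₀ x + θ u * ∑ i, max 0 (g i x + u i)) : ℝ) : EReal) else ⊤ := by
    intro u x
    rw [hf]
    split_ifs with h
    · rw [zero_add, ← EReal.coe_add]
    · rw [EReal.top_add_of_ne_bot (EReal.coe_ne_bot _),
        EReal.top_add_of_ne_bot (EReal.coe_ne_bot _)]
  -- simplified form of φ
  have hφ' : ∀ x, φ x =
      if x ∈ X ∧ ∀ i, g i x ≤ 0 then ((f₀ x : ℝ) : EReal) else ⊤ := by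
    intro x
    rw [hφ]
    by_cases hx : x ∈ X <;> by_cases hg0 : ∀ i, g i x ≤ 0
    · rw [if_pos hx, if_pos hg0, if_pos ⟨hx, hg0⟩, zero_add, add_zero]
    · rw [if_pos hx, if_neg hg0, if_neg (fun h => hg0 h.2), zero_add,
        EReal.add_top_of_ne_bot (EReal.coe_ne_bot _)]
    · rw [if_neg hx, if_pos hg0, if_neg (fun h => hx h.1),
        EReal.top_add_of_ne_bot (EReal.coe_ne_bot _), add_zero]
    · rw [if_neg hx, if_neg hg0, if_neg (fun h => hx h.1),
        EReal.top_add_of_ne_bot (EReal.coe_ne_bot _), EReal.top_add_top]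
  constructor
  · -- liminf inequality
    intro x xν hxν
    by_cases hx : x ∈ X
    · by_cases hg0 : ∀ i, g i x ≤ 0
      · -- finite case: φ x = f₀ x
        rw [hφ', if_pos ⟨hx, hg0⟩]
        have hlow : ∀ᶠ ν in atTop,
            ((f₀ (xν ν) : ℝ) : EReal) ≤ f (uν ν) (xν ν) := by
          filter_upwards with ν
          rw [hf']
          split_ifs with h
          · exact_mod_cast le_add_of_nonneg_right (mul_nonneg (hθpos _)
              (Finset.sum_nonneg fun i _ => le_max_left _ _))
          · exact le_top
        have htend : Tendsto (fun ν => ((f₀ (xν ν) : ℝ) : EReal)) atTop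
            (𝓝 ((f₀ x : ℝ) : EReal)) :=
          EReal.tendsto_coe.2 ((hf₀.tendsto x).comp hxν)
        calc ((f₀ x : ℝ) : EReal) = liminf (fun ν => ((f₀ (xν ν) : ℝ) : EReal)) atTop :=
              htend.liminf_eq.symm
          _ ≤ liminf (fun ν => f (uν ν) (xν ν)) atTop := liminf_le_liminf hlow
      · -- some constraint violated: φ x = ⊤, penalty blows up
        rw [hφ', if_neg (by simp [hg0])]
        push_neg at hg0
        obtain ⟨j, hj⟩ := hg0
        -- lower bound sequence
        set a : ℕ → ℝ := fun ν => f₀ (xν ν) + θ (uν ν) * max 0 (g j (xν ν) + uν ν j) with ha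
        have haT : Tendsto a atTop atTop := by
          have h1 : Tendsto (fun ν => f₀ (xν ν)) atTop (𝓝 (f₀ x)) := (hf₀.tendsto x).comp hxν
          have h2 : Tendsto (fun ν => g j (xν ν) + uν ν j) atTop (𝓝 (g j x + 0)) := by
            exact (((hg j).tendsto x).comp hxν).add
              (((continuous_apply j).tendsto 0).comp hu)
          have h3 : Tendsto (fun ν => max 0 (g j (xν ν) + uν ν j)) atTop
              (𝓝 (max 0 (g j x + 0))) := tendsto_const_nhds.max h2
          have hpos : (0 : ℝ) < max 0 (g j x + 0) := by
            rw [add_zero]; exact lt_max_of_lt_right hj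
          exact h1.add_atTop (Tendsto.atTop_mul_pos hpos hθtop h3)
        have hlow : ∀ᶠ ν in atTop, ((a ν : ℝ) : EReal) ≤ f (uν ν) (xν ν) := by
          filter_upwards with ν
          rw [hf']
          split_ifs with h
          · rw [EReal.coe_le_coe_iff, ha]
            have : max 0 (g j (xν ν) + uν ν j) ≤ ∑ i, max 0 (g i (xν ν) + uν ν i) :=
              Finset.single_le_sum (f := fun i => max 0 (g i (xν ν) + uν ν i))
                (fun i _ => le_max_left _ _) (Finset.mem_univ j)
            exact add_le_add_right (mul_le_mul_of_nonneg_left this (hθpos _)) _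
          · exact le_top
        have htop : Tendsto (fun ν => ((a ν : ℝ) : EReal)) atTop (𝓝 ⊤) := by
          rw [EReal.tendsto_nhds_top_iff_real]
          intro r
          filter_upwards [haT.eventually_gt_atTop r] with ν hν
          exact_mod_cast hν
        calc (⊤ : EReal) = liminf (fun ν => ((a ν : ℝ) : EReal)) atTop := htop.liminf_eq.symm
          _ ≤ liminf (fun ν => f (uν ν) (xν ν)) atTop := liminf_le_liminf hlow
    · -- x ∉ X: eventually f = ⊤
      rw [hφ', if_neg (by simp [hx])]
      have hev : ∀ᶠ ν in atTop, f (uν ν) (xν ν) = ⊤ := by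
        filter_upwards [hxν.eventually_mem (hXcl.isOpen_compl.mem_nhds hx)] with ν hν
        rw [hf', if_neg hν]
      have : Tendsto (fun ν => f (uν ν) (xν ν)) atTop (𝓝 ⊤) :=
        Tendsto.congr' (hev.mono fun ν h => h.symm) tendsto_const_nhds
      exact this.liminf_eq.symm.le
  · -- limsup inequality: constant sequence
    intro x
    refine ⟨fun _ => x, tendsto_const_nhds, ?_⟩
    by_cases h : x ∈ X ∧ ∀ i, g i x ≤ 0
    · rw [hφ', if_pos h]
      obtain ⟨hx, hg0⟩ := h
      -- penalty tends to 0
      have hpen : Tendsto (fun ν => θ (uν ν) * ∑ i, max 0 (g i x + uν ν i)) atTop (𝓝 0) := by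
        have hupper : ∀ ν, θ (uν ν) * ∑ i, max 0 (g i x + uν ν i)
            ≤ (m : ℝ) * (θ (uν ν) * max 0 (⨆ i, uν ν i)) := by
          intro ν
          have hsum : ∑ i, max 0 (g i x + uν ν i) ≤ (m : ℝ) * max 0 (⨆ i, uν ν i) := by
            calc ∑ i, max 0 (g i x + uν ν i) ≤ ∑ _i : Fin m, max 0 (⨆ i, uν ν i) := by
                  refine Finset.sum_le_sum fun i _ => max_le (le_max_left _ _) ?_
                  refine le_max_of_le_right ?_
                  calc g i x + uν ν i ≤ 0 + uν ν i := by
                        exact add_le_add_left (hg0 i) _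
                    _ = uν ν i := zero_add _
                    _ ≤ ⨆ j, uν ν j := le_ciSup (Finite.bddAbove_range _) i
              _ = (m : ℝ) * max 0 (⨆ i, uν ν i) := by
                  simp [Finset.sum_const, nsmul_eq_mul]
          calc θ (uν ν) * ∑ i, max 0 (g i x + uν ν i)
              ≤ θ (uν ν) * ((m : ℝ) * max 0 (⨆ i, uν ν i)) :=
                mul_le_mul_of_nonneg_left hsum (hθpos _)
            _ = (m : ℝ) * (θ (uν ν) * max 0 (⨆ i, uν ν i)) := by ring
        have hlower : ∀ ν, (0 : ℝ) ≤ θ (uν ν) * ∑ i, max 0 (g i x + uν ν i) := fun ν =>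
          mul_nonneg (hθpos _) (Finset.sum_nonneg fun i _ => le_max_left _ _)
        have hub : Tendsto (fun ν => (m : ℝ) * (θ (uν ν) * max 0 (⨆ i, uν ν i))) atTop
            (𝓝 0) := by
          simpa using hrate.const_mul (m : ℝ)
        exact tendsto_of_tendsto_of_tendsto_of_le_of_le tendsto_const_nhds hub hlower hupper
      have htend : Tendsto (fun ν => f (uν ν) x) atTop (𝓝 ((f₀ x : ℝ) : EReal)) := by
        have : Tendsto (fun ν => f₀ x + θ (uν ν) * ∑ i, max 0 (g i x + uν ν i)) atTop
            (𝓝 (f₀ x + 0)) := tendsto_const_nhds.add hpen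
        rw [add_zero] at this
        have := EReal.tendsto_coe.2 this
        refine this.congr fun ν => ?_
        rw [hf', if_pos hx]
      exact htend.limsup_eq.le
    · rw [hφ', if_neg h]
      exact le_top
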